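/- Let n ≥ 2 and let b_1,…,b_n be unit vectors in ℝ^d for any d ≥ n. Then there exist unit vectors c_1,…,c_n in ℝ^{n−1} such that Σ_{1≤i<j≤n} ‖c_i − c_j‖ ≥ Σ_{1≤i<j≤n} ‖b_i − b_j‖. Consequently, the supremum of Σ_{i<j} ‖b_i − b_j‖ over unit vectors in ℝ^d for d ≥ n−1 is independent of d, i.e., E(n, n−1) = E(n, d) for all d ≥ n−1. -/

import Mathlib

open Module RealInnerProductSpace

lemma lemA (E : Type*) [NormedAddCommGroup E] [InnerProductSpace ℝ E]
    [FiniteDimensional ℝ E] (k : ℕ) (h : finrank ℝ E ≤ k) :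
    Nonempty (E →ₗᵢ[ℝ] EuclideanSpace ℝ (Fin k)) := by
  set m := finrank ℝ E with hm
  let e : E ≃ₗᵢ[ℝ] EuclideanSpace ℝ (Fin m) := (stdOrthonormalBasis ℝ E).repr
  let gfun : EuclideanSpace ℝ (Fin m) → EuclideanSpace ℝ (Fin k) :=
    fun x => WithLp.toLp 2 (fun j => if hj : (j : ℕ) < m then x ⟨j, hj⟩ else 0)
  have hnorm : ∀ x, ‖gfun x‖ = ‖x‖ := by
    intro x
    rw [EuclideanSpace.norm_eq, EuclideanSpace.norm_eq]
    congr 1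
    have : ∑ i : Fin m, ‖x i‖ ^ 2 =
        ∑ j ∈ Finset.univ.map (Fin.castLEEmb h), ‖gfun x j‖ ^ 2 := by
      rw [Finset.sum_map]
      refine Finset.sum_congr rfl fun i _ => ?_
      simp [gfun, Fin.castLEEmb, Fin.castLE, i.isLt]
    rw [this]
    refine (Finset.sum_subset (Finset.subset_univ _) ?_).symm
    intro j _ hj
    have : ¬ (j : ℕ) < m := by
      intro hlt
      exact hj (Finset.mem_map.mpr ⟨⟨j, hlt⟩, Finset.mem_univ _, rfl⟩)
    simp [gfun, this]
  let g : EuclideanSpace ℝ (Fin m) →ₗᵢ[ℝ] EuclideanSpace ℝ (Fin k) :=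
    { toFun := gfun
      map_add' := by intro x y; ext j; by_cases hj : (j : ℕ) < m <;> simp [gfun, hj]
      map_smul' := by intro c x; ext j; by_cases hj : (j : ℕ) < m <;> simp [gfun, hj]
      norm_map' := hnorm }
  exact ⟨g.comp e.toLinearIsometry⟩

lemma part1 (n d : ℕ) (hn : 2 ≤ n) (hd : n ≤ d)
    (b : Fin n → EuclideanSpace ℝ (Fin d)) (hb : ∀ i, ‖b i‖ = 1) :
    ∃ c : Fin n → EuclideanSpace ℝ (Fin (n - 1)), (∀ i, ‖c i‖ = 1) ∧
      (∑ i, ∑ j ∈ Finset.Ioi i, ‖b i - b j‖) ≤ ∑ i, ∑ j ∈ Finset.Ioi i, ‖c i - c j‖ := by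
  classical
  haveI : NeZero n := ⟨by omega⟩
  let t : Finset (EuclideanSpace ℝ (Fin d)) :=
    (Finset.univ.erase (0 : Fin n)).image (fun i => b i - b 0)
  set V : Submodule ℝ (EuclideanSpace ℝ (Fin d)) := Submodule.span ℝ (t : Set _) with hV
  have hrank : finrank ℝ V ≤ n - 1 := by
    refine le_trans (finrank_span_finset_le_card t) ?_
    refine le_trans (Finset.card_image_le) ?_
    simp [Finset.card_erase_of_mem]
  have hmem : ∀ i, b i - b 0 ∈ V := by
    intro i
    by_cases hi : i = 0
    · simp [hi]
    · exact Submodule.subset_span (Finset.mem_coe.mpr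
        (Finset.mem_image.mpr ⟨i, Finset.mem_erase.mpr ⟨hi, Finset.mem_univ _⟩, rfl⟩))
  set q : EuclideanSpace ℝ (Fin d) := ((V.orthogonalProjectionOnto (-(b 0)) : V) : EuclideanSpace ℝ (Fin d)) with hq
  have hqV : q ∈ V := (V.orthogonalProjectionOnto (-(b 0))).2
  set p : EuclideanSpace ℝ (Fin d) := b 0 + q with hp
  have hpV : ∀ v ∈ V, ⟪p, v⟫ = 0 := by
    intro v hv
    have h1 : ⟪(-(b 0)) - q, v⟫ = 0 :=
      Submodule.starProjection_inner_eq_zero (K := V) (-(b 0)) v hv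
    have h2 : (-(b 0)) - q = -p := by rw [hp]; abel
    rw [h2, inner_neg_left, neg_eq_zero] at h1
    exact h1
  have hbp : ∀ i, b i - p ∈ V := by
    intro i
    have h2 : b i - p = (b i - b 0) - q := by rw [hp]; abel
    rw [h2]
    exact Submodule.sub_mem V (hmem i) hqV
  have hpyth : ∀ i, ‖b i - p‖ ^ 2 = 1 - ‖p‖ ^ 2 := by
    intro i
    have h1 : ⟪p, b i - p⟫ = 0 := hpV _ (hbp i)
    have h2 : ‖p + (b i - p)‖ ^ 2 = ‖p‖ ^ 2 + 2 * ⟪p, b i - p⟫ + ‖b i - p‖ ^ 2 :=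
      norm_add_sq_real p (b i - p)
    have h3 : p + (b i - p) = b i := by abel
    rw [h3, hb i, h1] at h2
    nlinarith
  set r : ℝ := Real.sqrt (1 - ‖p‖ ^ 2) with hr
  have hbr : ∀ i, ‖b i - p‖ = r := by
    intro i
    rw [hr, ← hpyth i, Real.sqrt_sq (norm_nonneg _)]
  have hr1 : r ≤ 1 := by
    nlinarith [hpyth 0, norm_nonneg p, norm_nonneg (b 0 - p), hbr 0]
  rcases eq_or_lt_of_le (Real.sqrt_nonneg (1 - ‖p‖ ^ 2) : (0:ℝ) ≤ r) with h0 | h0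
  · -- degenerate case: all points coincide
    have hbi : ∀ i, b i = p := fun i =>
      sub_eq_zero.mp (norm_eq_zero.mp (by rw [hbr i]; exact h0.symm))
    refine ⟨fun _ => EuclideanSpace.single (⟨0, by omega⟩ : Fin (n - 1)) 1, ?_, ?_⟩
    · intro i; simp [EuclideanSpace.norm_single]
    · have hz : (∑ i, ∑ j ∈ Finset.Ioi i, ‖b i - b j‖) = 0 := by
        simp [hbi]
      rw [hz]
      refine Finset.sum_nonneg fun i _ => Finset.sum_nonneg fun j _ => norm_nonneg _
  · have hrinv : 1 ≤ r⁻¹ := by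
      nlinarith [mul_inv_cancel₀ h0.ne', inv_nonneg.mpr h0.le]
    obtain ⟨f⟩ := lemA V (n - 1) hrank
    set u : Fin n → V := fun i => (r⁻¹ : ℝ) • (⟨b i - p, hbp i⟩ : V) with hu
    have hunorm : ∀ i, ‖u i‖ = 1 := by
      intro i
      have hsub : ‖(⟨b i - p, hbp i⟩ : V)‖ = r := hbr i
      rw [hu]
      simp only [norm_smul, Real.norm_eq_abs, abs_of_nonneg (inv_nonneg.mpr h0.le), hsub]
      rw [abs_inv, abs_of_pos h0]
      exact inv_mul_cancel₀ h0.ne'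
    have husub : ∀ i j, ‖u i - u j‖ = r⁻¹ * ‖b i - b j‖ := by
      intro i j
      have hmem' : b i - b j ∈ V := by
        have h2 : b i - b j = (b i - p) - (b j - p) := by abel
        rw [h2]; exact Submodule.sub_mem V (hbp i) (hbp j)
      have h1 : u i - u j = (r⁻¹ : ℝ) • (⟨b i - b j, hmem'⟩ : V) := by
        apply Subtype.ext
        push_cast [hu]
        rw [← smul_sub]
        congr 1
        abel
      rw [h1]
      have hsub : ‖(⟨b i - b j, hmem'⟩ : V)‖ = ‖b i - b j‖ := rfl
      rw [norm_smul, Real.norm_eq_abs, abs_of_nonneg (inv_nonneg.mpr h0.le), hsub]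
    refine ⟨fun i => f (u i), fun i => by rw [f.norm_map, hunorm], ?_⟩
    refine Finset.sum_le_sum fun i _ => Finset.sum_le_sum fun j _ => ?_
    calc ‖b i - b j‖ ≤ r⁻¹ * ‖b i - b j‖ := le_mul_of_one_le_left (norm_nonneg _) hrinv
      _ = ‖u i - u j‖ := (husub i j).symm
      _ = ‖f (u i) - f (u j)‖ := by rw [← f.map_sub, f.norm_map]

lemma bddAbove_S (n k : ℕ) : BddAbove {x : ℝ | ∃ b : Fin n → EuclideanSpace ℝ (Fin k),
    (∀ i, ‖b i‖ = 1) ∧ x = ∑ i, ∑ j ∈ Finset.Ioi i, ‖b i - b j‖} := by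
  refine ⟨2 * n * n, ?_⟩
  rintro x ⟨b, hb, rfl⟩
  calc ∑ i, ∑ j ∈ Finset.Ioi i, ‖b i - b j‖
      ≤ ∑ _i : Fin n, ∑ _j ∈ Finset.Ioi _i, (2:ℝ) := by
        refine Finset.sum_le_sum fun i _ => Finset.sum_le_sum fun j _ => ?_
        calc ‖b i - b j‖ ≤ ‖b i‖ + ‖b j‖ := norm_sub_le _ _
          _ = 2 := by rw [hb i, hb j]; norm_num
    _ ≤ ∑ _i : Fin n, (n:ℝ) * 2 := by
        refine Finset.sum_le_sum fun i _ => ?_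
        rw [Finset.sum_const, nsmul_eq_mul]
        have h1 : ((Finset.Ioi i).card : ℝ) ≤ n := by
          have := Finset.card_le_univ (Finset.Ioi i)
          rw [Fintype.card_fin] at this
          exact_mod_cast this
        nlinarith
    _ = 2 * n * n := by
        rw [Finset.sum_const, Finset.card_univ, Fintype.card_fin, nsmul_eq_mul]; ring

lemma nonempty_S (n k : ℕ) (hk : 0 < k) : Set.Nonempty {x : ℝ |
    ∃ b : Fin n → EuclideanSpace ℝ (Fin k),
    (∀ i, ‖b i‖ = 1) ∧ x = ∑ i, ∑ j ∈ Finset.Ioi i, ‖b i - b j‖} := by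
  refine ⟨_, fun _ => EuclideanSpace.single (⟨0, hk⟩ : Fin k) 1, fun i => ?_, rfl⟩
  simp [EuclideanSpace.norm_single]

theorem stmt5 (n : ℕ) (hn : 2 ≤ n) :
    (∀ d : ℕ, n ≤ d → ∀ b : Fin n → EuclideanSpace ℝ (Fin d), (∀ i, ‖b i‖ = 1) →
      ∃ c : Fin n → EuclideanSpace ℝ (Fin (n - 1)), (∀ i, ‖c i‖ = 1) ∧
        (∑ i, ∑ j ∈ Finset.Ioi i, ‖b i - b j‖) ≤ ∑ i, ∑ j ∈ Finset.Ioi i, ‖c i - c j‖) ∧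
    (∀ d : ℕ, n - 1 ≤ d →
      sSup {x : ℝ | ∃ b : Fin n → EuclideanSpace ℝ (Fin d), (∀ i, ‖b i‖ = 1) ∧
          x = ∑ i, ∑ j ∈ Finset.Ioi i, ‖b i - b j‖} =
      sSup {x : ℝ | ∃ b : Fin n → EuclideanSpace ℝ (Fin (n - 1)), (∀ i, ‖b i‖ = 1) ∧
          x = ∑ i, ∑ j ∈ Finset.Ioi i, ‖b i - b j‖}) := by
  refine ⟨fun d hd b hb => part1 n d hn hd b hb, ?_⟩
  intro d hd
  have hm1 : 0 < n - 1 := by omega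
  apply le_antisymm
  · refine csSup_le (nonempty_S n d (by omega)) ?_
    rintro x ⟨b, hb, rfl⟩
    rcases le_or_gt n d with hnd | hnd
    · obtain ⟨c, hc, hle⟩ := part1 n d hn hnd b hb
      exact le_trans hle (le_csSup (bddAbove_S n (n - 1)) ⟨c, hc, rfl⟩)
    · have hdm : d = n - 1 := by omega
      subst hdm
      exact le_csSup (bddAbove_S n (n - 1)) ⟨b, hb, rfl⟩
  · refine csSup_le_csSup (bddAbove_S n d) (nonempty_S n (n - 1) hm1) ?_
    rintro x ⟨c, hc, rfl⟩
    obtain ⟨f⟩ := lemA (EuclideanSpace ℝ (Fin (n - 1))) d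
      (by rw [finrank_euclideanSpace_fin]; exact hd)
    refine ⟨fun i => f (c i), fun i => by rw [f.norm_map, hc], ?_⟩
    refine Finset.sum_congr rfl fun i _ => Finset.sum_congr rfl fun j _ => ?_
    rw [← f.map_sub, f.norm_map]
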